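/- Let X and Y be td-lcsc spaces and let σ : X → Y be a surjective local homeomorphism. Let f₁, f₂ ∈ C_c(X, ℕ) and suppose there exists F ∈ C_c(R(σ), ℤ) such that for every u ∈ X, f₁(u) + f₂(u) = Σ_{v : σ(v) = σ(u)} (F(v,u) − F(u,v)) (i.e. [f₁] = [−f₂] in H₀(R(σ))). Then f₁ = 0 and f₂ = 0. In particular H₀(R(σ))⁺ ∩ (−H₀(R(σ))⁺) = {0}, so H₀(R(σ)) is an ordered group. -/
import Mathlib

open Function Set

/-- A closed set that is "locally a single point" meets every compact set in a finite set. -/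
lemma aux_closed_discrete_inter_compact_finite {X : Type*} [TopologicalSpace X]
    {A K : Set X} (hA : IsClosed A)
    (hU : ∀ s ∈ A, ∃ U : Set X, IsOpen U ∧ s ∈ U ∧ A ∩ U ⊆ {s})
    (hK : IsCompact K) : (A ∩ K).Finite := by
  classical
  choose! U hUo hUs hU1 using hU
  have hc : IsCompact (A ∩ K) := hK.inter_left hA
  have hcover : A ∩ K ⊆ ⋃ x ∈ A, U x := fun x hx => Set.mem_biUnion hx.1 (hUs x hx.1)
  obtain ⟨t, htA, htfin, hcov⟩ :=
    hc.elim_finite_subcover_image (fun x hx => hUo x hx) hcover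
  refine htfin.subset fun x hx => ?_
  obtain ⟨i, hi, hxi⟩ := Set.mem_iUnion₂.1 (hcov hx)
  have : x ∈ ({i} : Set X) := hU1 i (htA hi) ⟨hx.1, hxi⟩
  rwa [this]

/-- If `f₁, f₂ ∈ C_c(X, ℕ)` satisfy `[f₁] = [−f₂]` in `H₀(R(σ))`, then
`f₁ = 0` and `f₂ = 0`; hence `H₀(R(σ))⁺ ∩ (−H₀(R(σ))⁺) = {0}`. -/
theorem H0_Rsigma_positives_intersect_trivially
    {X Y : Type*} [TopologicalSpace X] [TopologicalSpace Y]
    [LocallyCompactSpace X] [T2Space X] [SecondCountableTopology X]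
    [TotallyDisconnectedSpace X]
    [LocallyCompactSpace Y] [T2Space Y] [SecondCountableTopology Y]
    [TotallyDisconnectedSpace Y]
    (σ : X → Y) (hσ : IsLocalHomeomorph σ) (hsurj : Function.Surjective σ)
    (f₁ f₂ : X → ℤ)
    (hf₁ : Continuous f₁) (hf₁c : HasCompactSupport f₁) (hf₁0 : ∀ x, 0 ≤ f₁ x)
    (hf₂ : Continuous f₂) (hf₂c : HasCompactSupport f₂) (hf₂0 : ∀ x, 0 ≤ f₂ x)
    (hF : ∃ F : {p : X × X // σ p.1 = σ p.2} → ℤ,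
        Continuous F ∧ HasCompactSupport F ∧
        ∀ u : X, f₁ u + f₂ u =
          ∑ᶠ (v : X) (h : σ v = σ u), (F ⟨(v, u), h⟩ - F ⟨(u, v), h.symm⟩)) :
    f₁ = 0 ∧ f₂ = 0 := by
  classical
  obtain ⟨F, hFcont, hFsupp, hFeq⟩ := hF
  -- the antisymmetric "divergence" kernel
  set D : X → X → ℤ := fun v u =>
    if h : σ v = σ u then F ⟨(v, u), h⟩ - F ⟨(u, v), h.symm⟩ else 0 with hD
  have hDanti : ∀ v u, D v u = -D u v := by
    intro v u
    by_cases h : σ v = σ u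
    · simp only [hD, dif_pos h, dif_pos h.symm]
      ring
    · have h' : ¬ σ u = σ v := fun hc => h hc.symm
      simp [hD, dif_neg h, dif_neg h']
  -- the hypothesis in terms of D
  have hfD : ∀ u, f₁ u + f₂ u = ∑ᶠ v, D v u := by
    intro u
    rw [hFeq u]
    refine finsum_congr fun v => ?_
    by_cases h : σ v = σ u
    · simp only [hD, dif_pos h]
      exact finsum_eq_single (fun h' : σ v = σ u => F ⟨(v, u), h'⟩ - F ⟨(u, v), h'.symm⟩) h
        (fun j hj => absurd (Subsingleton.elim j h) hj)
    · simp only [hD, dif_neg h]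
      haveI : IsEmpty (σ v = σ u) := ⟨h⟩
      exact finsum_of_isEmpty _
  -- projections of the support of F
  have hK1 : IsCompact ((fun p : {p : X × X // σ p.1 = σ p.2} => p.1.1) '' tsupport F) :=
    hFsupp.image (show Continuous fun p : {p : X × X // σ p.1 = σ p.2} => p.1.1 from continuous_fst.comp continuous_subtype_val)
  have hK2 : IsCompact ((fun p : {p : X × X // σ p.1 = σ p.2} => p.1.2) '' tsupport F) :=
    hFsupp.image (show Continuous fun p : {p : X × X // σ p.1 = σ p.2} => p.1.2 from continuous_snd.comp continuous_subtype_val)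
  have hgc : HasCompactSupport (f₁ + f₂) := hf₁c.add hf₂c
  set C : Set X := ((fun p : {p : X × X // σ p.1 = σ p.2} => p.1.1) '' tsupport F) ∪ ((fun p : {p : X × X // σ p.1 = σ p.2} => p.1.2) '' tsupport F)
      ∪ tsupport (f₁ + f₂) with hC
  have hCcomp : IsCompact C := (hK1.union hK2).union hgc
  -- main pointwise claim
  have key : ∀ u₀ : X, f₁ u₀ + f₂ u₀ = 0 := by
    intro u₀
    set S : Set X := σ ⁻¹' {σ u₀} with hS
    have hu₀S : u₀ ∈ S := rfl
    have hSclosed : IsClosed S := isClosed_singleton.preimage hσ.continuous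
    have hSloc : ∀ s ∈ S, ∃ U : Set X, IsOpen U ∧ s ∈ U ∧ S ∩ U ⊆ {s} := by
      intro s hs
      obtain ⟨e, hse, heq⟩ := hσ s
      refine ⟨e.source, e.open_source, hse, ?_⟩
      rintro v ⟨hvS, hvU⟩
      have hσv : σ v = σ s := by
        have h1 : σ v = σ u₀ := hvS
        have h2 : σ s = σ u₀ := hs
        rw [h1, h2]
      have : e v = e s := by rw [← heq]; exact hσv
      exact e.injOn hvU hse this
    have hfin : (S ∩ C).Finite := aux_closed_discrete_inter_compact_finite hSclosed hSloc hCcomp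
    set E : Finset X := hfin.toFinset with hE
    have hEmem : ∀ x, x ∈ E ↔ x ∈ S ∩ C := fun x => hfin.mem_toFinset
    -- for nonzero D v u with u in the fiber, v lands in E
    have hDsupp : ∀ u ∈ S, ∀ v : X, D v u ≠ 0 → v ∈ E := by
      intro u hu v hv
      have h : σ v = σ u := by
        by_contra h
        exact hv (by simp [hD, dif_neg h])
      have hvS : v ∈ S := by
        have : σ v = σ u₀ := h.trans hu
        exact this
      have hne : F ⟨(v, u), h⟩ ≠ 0 ∨ F ⟨(u, v), h.symm⟩ ≠ 0 := by
        by_contra hc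
        push_neg at hc
        apply hv
        simp [hD, dif_pos h, hc.1, hc.2]
      have hvC : v ∈ C := by
        rcases hne with h1 | h1
        · exact Or.inl (Or.inl ⟨⟨(v, u), h⟩, subset_tsupport _ h1, rfl⟩)
        · exact Or.inl (Or.inr ⟨⟨(u, v), h.symm⟩, subset_tsupport _ h1, rfl⟩)
      exact (hEmem v).2 ⟨hvS, hvC⟩
    -- the finsum becomes a finite sum over E
    have hsumE : ∀ u ∈ S, f₁ u + f₂ u = ∑ v ∈ E, D v u := by
      intro u hu
      rw [hfD u]
      exact finsum_eq_sum_of_support_subset _ fun v hv => hDsupp u hu v hv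
    -- the double sum vanishes by antisymmetry
    have hdouble : ∑ u ∈ E, ∑ v ∈ E, D v u = 0 := by
      have h1 : ∑ u ∈ E, ∑ v ∈ E, D v u = ∑ v ∈ E, ∑ u ∈ E, D v u := Finset.sum_comm
      have h2 : ∑ v ∈ E, ∑ u ∈ E, D v u = - ∑ v ∈ E, ∑ u ∈ E, D u v := by
        rw [← Finset.sum_neg_distrib]
        refine Finset.sum_congr rfl fun v _ => ?_
        rw [← Finset.sum_neg_distrib]
        exact Finset.sum_congr rfl fun u _ => hDanti v u
      have h3 : ∑ v ∈ E, ∑ u ∈ E, D u v = ∑ u ∈ E, ∑ v ∈ E, D v u := rfl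
      omega
    have hzero : ∑ u ∈ E, (f₁ u + f₂ u) = 0 := by
      rw [Finset.sum_congr rfl fun u hu => hsumE u ((hEmem u).1 hu).1]
      exact hdouble
    by_cases hu₀E : u₀ ∈ E
    · have := (Finset.sum_eq_zero_iff_of_nonneg
        (fun u _ => by have := hf₁0 u; have := hf₂0 u; omega)).1 hzero u₀ hu₀E
      exact this
    · have hu₀C : u₀ ∉ C := fun hc => hu₀E ((hEmem u₀).2 ⟨hu₀S, hc⟩)
      have : u₀ ∉ tsupport (f₁ + f₂) := fun hc => hu₀C (Or.inr hc)
      have h0 : (f₁ + f₂) u₀ = 0 := image_eq_zero_of_notMem_tsupport this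
      simpa using h0
  constructor
  · funext x
    have := key x; have := hf₁0 x; have := hf₂0 x
    simp only [Pi.zero_apply]; omega
  · funext x
    have := key x; have := hf₁0 x; have := hf₂0 x
    simp only [Pi.zero_apply]; omega
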